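/- arXiv:2212.12564 — 2 statements merged into one kernel-verified Lean document; each statement's English description precedes it below -/
import Mathlib

section
/- Let A be a coherent commutative ring and let J ⊆ A be a finitely generated ideal. Then the quotient ring A/J is coherent. -/
/-- A commutative ring is *coherent* if every finitely generated ideal is
finitely presented as a module. -/
def IsCoherentRing (A : Type) [CommRing A] : Prop :=
  ∀ I : Ideal A, I.FG → Module.FinitePresentation A I

/-- If `M` is an `A ⧸ J`-module which is finitely presented over `A`, then it is
finitely presented over `A ⧸ J`. -/
lemma Module.FinitePresentation.of_quotient_aux {A : Type} [CommRing A] (J : Ideal A)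
    (M : Type) [AddCommGroup M] [Module A M] [Module (A ⧸ J) M]
    [IsScalarTower A (A ⧸ J) M] [h : Module.FinitePresentation A M] :
    Module.FinitePresentation (A ⧸ J) M := by
  classical
  obtain ⟨s, hs, hker⟩ := h
  let π : A →ₗ[A] A ⧸ J := Algebra.linearMap A (A ⧸ J)
  let φ : (s →₀ A) →ₗ[A] (s →₀ (A ⧸ J)) := Finsupp.mapRange.linearMap π
  have hφ : Function.Surjective φ :=
    Finsupp.mapRange_surjective _ (map_zero _) Ideal.Quotient.mk_surjective
  let f : (s →₀ A) →ₗ[A] M := Finsupp.linearCombination A ((↑) : s → M)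
  let g : (s →₀ (A ⧸ J)) →ₗ[A ⧸ J] M := Finsupp.linearCombination (A ⧸ J) ((↑) : s → M)
  have hcomp : (g.restrictScalars A) ∘ₗ φ = f := by
    ext i
    simp [f, g, φ, π, algebraMap_smul]
  refine ⟨s, ?_, ?_⟩
  · rw [eq_top_iff]
    intro x _
    have hx : x ∈ Submodule.span A (s : Set M) := hs.symm ▸ Submodule.mem_top
    exact Submodule.span_le_restrictScalars A (A ⧸ J) (s : Set M) hx
  · apply Submodule.FG.of_restrictScalars A
    have : (LinearMap.ker g).restrictScalars A = (LinearMap.ker f).map φ := by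
      rw [← hcomp, LinearMap.ker_comp]
      exact (Submodule.map_comap_eq_of_surjective hφ _).symm
    rw [this]
    exact hker.map φ

/-- Let `A` be a coherent commutative ring and let `J ⊆ A` be a
finitely generated ideal.  Then the quotient ring `A/J` is coherent. -/
theorem isCoherentRing_quotient {A : Type} [CommRing A] (hA : IsCoherentRing A)
    (J : Ideal A) (hJ : J.FG) : IsCoherentRing (A ⧸ J) := by
  intro I' hI'
  set π := Ideal.Quotient.mk J with hπ
  set I : Ideal A := I'.comap π with hIdef
  have hJI : J ≤ I := by
    intro x hx
    show π x ∈ I'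
    rw [Ideal.Quotient.eq_zero_iff_mem.2 hx]
    exact I'.zero_mem
  have hkerlin : LinearMap.ker (Algebra.linearMap A (A ⧸ J)) = J.restrictScalars A := by
    ext x
    simp [Ideal.Quotient.eq_zero_iff_mem]
  have hmap : Submodule.map (Algebra.linearMap A (A ⧸ J)) I
      = I'.restrictScalars A := by
    ext y
    simp only [Submodule.mem_map, Submodule.restrictScalars_mem, Algebra.linearMap_apply]
    show _ ↔ y ∈ I'
    constructor
    · rintro ⟨x, hx, rfl⟩; exact hx
    · intro hy
      obtain ⟨x, rfl⟩ := Ideal.Quotient.mk_surjective y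
      exact ⟨x, hy, rfl⟩
  have hI : I.FG := by
    apply Submodule.fg_of_fg_map_of_fg_inf_ker (Algebra.linearMap A (A ⧸ J))
    · rw [hmap]
      exact Submodule.fg_restrictScalars hI' Ideal.Quotient.mk_surjective
    · rw [hkerlin]
      have heq : I ⊓ (J.restrictScalars A) = J.restrictScalars A := by
        rw [inf_eq_right]
        exact hJI
      rw [heq]
      exact hJ
  have hIfp : Module.FinitePresentation A I := hA I hI
  -- the natural A-linear surjection I → I'
  let ψ : I →ₗ[A] I' :=
    { toFun := fun x => ⟨π x.1, x.2⟩
      map_add' := by intro x y; ext; simp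
      map_smul' := by
        intro a x
        apply Subtype.ext
        show π (a • x.1) = a • (π x.1)
        simp [Algebra.smul_def, smul_eq_mul, map_mul]; rfl }
  have hψval : ∀ x : I, (ψ x : A ⧸ J) = π x.1 := fun _ => rfl
  have hψsurj : Function.Surjective ψ := by
    rintro ⟨y, hy⟩
    obtain ⟨x, rfl⟩ := Ideal.Quotient.mk_surjective y
    exact ⟨⟨x, hy⟩, Subtype.ext (hψval _)⟩
  have hψker : (LinearMap.ker ψ).FG := by
    apply Submodule.fg_of_fg_map_injective I.subtype (Submodule.injective_subtype _)
    have : (LinearMap.ker ψ).map I.subtype = J.restrictScalars A := by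
      ext x
      simp only [Submodule.mem_map, LinearMap.mem_ker, Submodule.restrictScalars_mem]
      constructor
      · rintro ⟨⟨x, hx⟩, hx0, rfl⟩
        have h2 : π x = 0 := (hψval _).symm.trans (congrArg Subtype.val hx0)
        exact Ideal.Quotient.eq_zero_iff_mem.1 h2
      · intro hx
        refine ⟨⟨x, hJI hx⟩, ?_, rfl⟩
        apply Subtype.ext
        rw [hψval]
        exact Ideal.Quotient.eq_zero_iff_mem.2 hx
    rw [this]
    exact hJ
  have : Module.FinitePresentation A I' :=
    Module.finitePresentation_of_surjective ψ hψsurj hψker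
  exact Module.FinitePresentation.of_quotient_aux J I'
end

section
/- Let A be an additive category. Then A is left coherent (i.e., its category of finitely presented additive functors A → Ab behaves coherently) if and only if every morphism f : A → B in A admits a weak cokernel, i.e. a morphism g : B → C such that the sequence Hom(C,−) → Hom(B,−) → Hom(A,−) of functors is exact. -/
open CategoryTheory Limits Opposite

universe v u

variable (A : Type u) [Category.{v} A] [Preadditive A] [HasFiniteBiproducts A]

/-- The representable additive functor `Hom(X, −) : A ⥤ Ab`. -/
noncomputable abbrev repFunctor (X : A) : A ⥤ AddCommGrpCat.{v} :=
  preadditiveCoyoneda.obj (op X)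

variable {A}

/-- An additive functor `A ⥤ Ab` is finitely generated if it admits an
epimorphism from a representable functor. -/
def IsFGFunctor (F : A ⥤ AddCommGrpCat.{v}) : Prop :=
  ∃ (X : A) (p : repFunctor A X ⟶ F), Epi p

/-- An additive functor `A ⥤ Ab` is finitely presented if it is the cokernel of
a morphism of representable functors, i.e. there is an exact sequence
`Hom(Y,−) → Hom(X,−) → F → 0`. -/
noncomputable def IsFPFunctor (F : A ⥤ AddCommGrpCat.{v}) : Prop :=
  ∃ (X Y : A) (α : repFunctor A Y ⟶ repFunctor A X), Nonempty (F ≅ cokernel α)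

variable (A)

/-- The additive category `A` is left coherent: every finitely generated
subfunctor of a representable functor `Hom(X,−)` is finitely presented. -/
noncomputable def IsLeftCoherent : Prop :=
  ∀ (X : A) (K : A ⥤ AddCommGrpCat.{v}) (i : K ⟶ repFunctor A X),
    Mono i → IsFGFunctor K → IsFPFunctor K

/-- `g : B ⟶ C` is a weak cokernel of `f : A' ⟶ B`: `g ∘ f = 0` and the induced
sequence `Hom(C,−) → Hom(B,−) → Hom(A',−)` of functors is exact, i.e. any
`h : B ⟶ T` with `h ∘ f = 0` factors through `g`. -/
def IsWeakCokernel {A' B C : A} (f : A' ⟶ B) (g : B ⟶ C) : Prop :=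
  f ≫ g = 0 ∧ ∀ (T : A) (h : B ⟶ T), f ≫ h = 0 → ∃ k : C ⟶ T, h = g ≫ k

section Aux

set_option linter.unusedSectionVars false

variable {A}

/-- Naturality of a transformation out of a representable, elementwise. -/
lemma natApp {F G : A ⥤ AddCommGrpCat.{v}} (q : F ⟶ G) {T T' : A} (t : T ⟶ T')
    (x : F.obj T) : q.app T' (F.map t x) = G.map t (q.app T x) := by
  have h1 := ConcreteCategory.congr_hom (q.naturality t) x
  rw [comp_apply, comp_apply] at h1
  exact h1

/-- The additive Yoneda lemma, in the form we need. -/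
lemma repApp {X : A} {F : A ⥤ AddCommGrpCat.{v}} (β : repFunctor A X ⟶ F)
    {T : A} (h : X ⟶ T) : β.app T h = F.map h (β.app X (𝟙 X)) := by
  have h1 := natApp β h (𝟙 X)
  convert h1 using 3
  exact congrArg _ (show h = 𝟙 X ≫ h by simp)

lemma appSurj {F G : A ⥤ AddCommGrpCat.{v}} (q : F ⟶ G) [Epi q] (T : A) :
    Function.Surjective (q.app T) := by
  rw [← AddCommGrpCat.epi_iff_surjective]; infer_instance

lemma appInj {F G : A ⥤ AddCommGrpCat.{v}} (q : F ⟶ G) [Mono q] (T : A) :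
    Function.Injective (q.app T) := by
  rw [← AddCommGrpCat.mono_iff_injective]; infer_instance

/-- Exactness in the functor category is detected pointwise. -/
lemma evExact (S : ShortComplex (A ⥤ AddCommGrpCat.{v})) :
    S.Exact ↔ ∀ T : A, (S.map ((evaluation A AddCommGrpCat.{v}).obj T)).Exact := by
  constructor
  · intro h T
    exact h.map _
  · intro h
    rw [ShortComplex.exact_iff_isZero_homology, Functor.isZero_iff]
    intro T
    exact ((S.mapHomologyIso ((evaluation A AddCommGrpCat.{v}).obj T)).isZero_iff).1
      ((ShortComplex.exact_iff_isZero_homology _).1 (h T))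

end Aux

/-- Let `A` be an additive category.  Then `A` is left
coherent (i.e. its category of finitely presented additive functors `A → Ab`
behaves coherently: finitely generated subfunctors of representables are
finitely presented) if and only if every morphism `f : A' → B` in `A` admits a
weak cokernel `g : B → C`, i.e. one for which the sequence of functors
`Hom(C,−) → Hom(B,−) → Hom(A',−)` is exact. -/
theorem isLeftCoherent_iff_weakCokernels :
    IsLeftCoherent A ↔ ∀ {A' B : A} (f : A' ⟶ B), ∃ (C : A) (g : B ⟶ C),
      IsWeakCokernel A f g := by
  constructor
  · -- left coherent → weak cokernels
    intro hco A' B f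
    haveI := hasBinaryBiproducts_of_finite_biproducts A
    let θ : repFunctor A B ⟶ repFunctor A A' := preadditiveCoyoneda.map f.op
    have hθapp : ∀ (T : A) (h : B ⟶ T), θ.app T h = f ≫ h := fun _ _ => rfl
    let K := Limits.image θ
    let i : K ⟶ repFunctor A A' := Limits.image.ι θ
    let p : repFunctor A B ⟶ K := factorThruImage θ
    have hfac : ∀ (T : A) (h : B ⟶ T), i.app T (p.app T h) = f ≫ h := by
      intro T h
      have h1 := ConcreteCategory.congr_hom (NatTrans.congr_app (image.fac θ) T) h
      erw [NatTrans.comp_app, comp_apply] at h1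
      exact h1.trans (hθapp T h)
    obtain ⟨P, Q, α, ⟨e⟩⟩ := hco A' K i inferInstance ⟨B, p, inferInstance⟩
    let π : repFunctor A P ⟶ K := cokernel.π α ≫ e.inv
    haveI : Epi π := epi_comp _ _
    obtain ⟨u, hu⟩ : ∃ u : P ⟶ B, _ := appSurj π B (p.app B (𝟙 B))
    obtain ⟨v, hv⟩ : ∃ v : B ⟶ P, _ := appSurj p P (π.app P (𝟙 P))
    let a : P ⟶ Q := α.app Q (𝟙 Q)
    have hαapp : ∀ (T : A) (w : Q ⟶ T), α.app T w = a ≫ w := by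
      intro T w
      exact repApp α w
    have key1 : ∀ (T : A) (h : B ⟶ T), π.app T (u ≫ h) = p.app T h := by
      intro T h
      have h1 : π.app T ((repFunctor A P).map h u) = K.map h (π.app B u) := natApp π h u
      have h2 : (repFunctor A P).map h u = u ≫ h := rfl
      rw [h2, hu] at h1
      rw [h1, ← repApp p h]
    have key2 : ∀ (T : A) (k : P ⟶ T), p.app T (v ≫ k) = π.app T k := by
      intro T k
      have h1 : p.app T ((repFunctor A B).map k v) = K.map k (p.app P v) := natApp p k v
      have h2 : (repFunctor A B).map k v = v ≫ k := rfl
      rw [h2, hv] at h1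
      rw [h1, ← repApp π k]
    -- `f ≫ v ≫ a = 0`
    have hc : α ≫ π = 0 := by
      show α ≫ cokernel.π α ≫ e.inv = 0
      rw [← Category.assoc, cokernel.condition, zero_comp]
    have hπa : π.app Q a = 0 := by
      have hx : (α ≫ π).app Q (𝟙 Q) = (0 : repFunctor A Q ⟶ K).app Q (𝟙 Q) := by rw [hc]
      erw [NatTrans.comp_app, comp_apply] at hx
      exact hx
    have hva : f ≫ v ≫ a = 0 := by
      have h1 : p.app Q (v ≫ a) = 0 := by rw [key2, hπa]
      have h2 := hfac Q (v ≫ a)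
      rw [h1, map_zero] at h2
      exact h2.symm
    -- `f ≫ (𝟙 B - v ≫ u) = 0`
    have hpe : p.app B (𝟙 B - v ≫ u) = 0 := by
      erw [map_sub, key2, hu, sub_self]
    have he : f ≫ (𝟙 B - v ≫ u) = 0 := by
      have h2 := hfac B (𝟙 B - v ≫ u)
      rw [hpe, map_zero] at h2
      exact h2.symm
    -- exactness of the presentation, pointwise
    have hS : (ShortComplex.mk α (cokernel.π α) (cokernel.condition α)).Exact :=
      ShortComplex.exact_of_g_is_cokernel _ (cokernelIsCokernel α)
    refine ⟨Q ⊞ B, biprod.lift (v ≫ a) (𝟙 B - v ≫ u), ?_, ?_⟩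
    · apply biprod.hom_ext
      · simpa using hva
      · simpa using he
    · intro T h hfh
      have hp0 : p.app T h = 0 := by
        apply appInj i
        rw [map_zero, hfac, hfh]; rfl
      have hπ0 : (cokernel.π α).app T (u ≫ h) = 0 := by
        have h1 : π.app T (u ≫ h) = 0 := by rw [key1, hp0]
        have h2 : π ≫ e.hom = cokernel.π α := by
          show (cokernel.π α ≫ e.inv) ≫ e.hom = cokernel.π α
          simp
        have h3 := ConcreteCategory.congr_hom (NatTrans.congr_app h2 T) (u ≫ h : P ⟶ T)
        erw [NatTrans.comp_app, comp_apply, h1] at h3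
        rw [← h3]
        exact (e.hom.app T).hom.map_zero
      obtain ⟨w, hw⟩ : ∃ w : Q ⟶ T, _ := (ShortComplex.ab_exact_iff _).1
        ((evExact (ShortComplex.mk α (cokernel.π α) (cokernel.condition α))).1 hS T)
        (u ≫ h) hπ0
      have haw : a ≫ w = u ≫ h := by rw [← hαapp]; exact hw
      refine ⟨biprod.desc w h, ?_⟩
      rw [biprod.lift_desc, Category.assoc, haw, Preadditive.sub_comp, Category.id_comp]
      simp only [Category.assoc]
      abel
  · -- weak cokernels → left coherent
    intro hwc X K i hi hFG
    haveI := hi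
    obtain ⟨B, p, hp⟩ := hFG
    haveI := hp
    let f : X ⟶ B := (p ≫ i).app B (𝟙 B)
    have hfi : ∀ (T : A) (h : B ⟶ T), i.app T (p.app T h) = f ≫ h := by
      intro T h
      have h1 := repApp (p ≫ i) h
      erw [NatTrans.comp_app, comp_apply] at h1
      exact h1
    obtain ⟨C, g, hg0, hgf⟩ := hwc f
    let α : repFunctor A C ⟶ repFunctor A B := preadditiveCoyoneda.map g.op
    have hαapp : ∀ (T : A) (k : C ⟶ T), α.app T k = g ≫ k := fun _ _ => rfl
    have hαp : α ≫ p = 0 := by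
      rw [← cancel_mono i, Category.assoc, zero_comp]
      ext T k
      show i.app T (p.app T (α.app T k)) = 0
      erw [hαapp, hfi, ← Category.assoc, hg0, zero_comp]; rfl
    have hS : (ShortComplex.mk α p hαp).Exact := by
      rw [evExact]
      intro T
      rw [ShortComplex.ab_exact_iff]
      intro h hph
      have hfh : f ≫ h = 0 := by
        have := hfi T h
        rw [show p.app T h = 0 from hph, map_zero] at this
        exact this.symm
      obtain ⟨k, hk⟩ := hgf T h hfh
      exact ⟨k, by show α.app T k = h; rw [hαapp]; exact hk.symm⟩
    haveI : Epi (ShortComplex.mk α p hαp).g := hp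
    have myiso := IsColimit.coconePointUniqueUpToIso hS.gIsCokernel (cokernelIsCokernel α)
    exact ⟨B, C, α, ⟨myiso⟩⟩
end
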